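/- For any a ≥ 2 and b ∈ ℕ, the cyclic Ramsey number of the monotone cycle of order a versus the monotone path of order b equals 1 + (a−1)(b−1). -/

import Mathlib

open SimpleGraph Finset

/-- A symmetric `k`-edge-coloring `χ` of the complete graph on `Fin n` contains a copy of `H`
in color `j` via a strictly increasing embedding. -/
def ContainsOrd {m n k : ℕ} (H : SimpleGraph (Fin m))
    (χ : Fin n → Fin n → Fin k) (j : Fin k) : Prop :=
  ∃ φ : Fin m → Fin n, StrictMono φ ∧ ∀ u v : Fin m, H.Adj u v → χ (φ u) (φ v) = j

/-- Contains a copy via an embedding that is increasing up to a cyclic permutation. -/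
def ContainsCyc {m n k : ℕ} (H : SimpleGraph (Fin m))
    (χ : Fin n → Fin n → Fin k) (j : Fin k) : Prop :=
  ∃ φ : Fin m → Fin n, (∃ t : Fin m, StrictMono fun i : Fin m => φ (i + t)) ∧
    ∀ u v : Fin m, H.Adj u v → χ (φ u) (φ v) = j

/-- Contains a copy via an arbitrary injective embedding. -/
def ContainsStd {m n k : ℕ} (H : SimpleGraph (Fin m))
    (χ : Fin n → Fin n → Fin k) (j : Fin k) : Prop :=
  ∃ φ : Fin m → Fin n, Function.Injective φ ∧ ∀ u v : Fin m, H.Adj u v → χ (φ u) (φ v) = j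

/-- The ordered Ramsey number of a family of graphs. -/
noncomputable def Rord {k : ℕ} (m : Fin k → ℕ) (H : ∀ j, SimpleGraph (Fin (m j))) : ℕ :=
  sInf {n | ∀ χ : Fin n → Fin n → Fin k, (∀ u v, χ u v = χ v u) → ∃ j, ContainsOrd (H j) χ j}

/-- The cyclic Ramsey number of a family of graphs. -/
noncomputable def Rcyc {k : ℕ} (m : Fin k → ℕ) (H : ∀ j, SimpleGraph (Fin (m j))) : ℕ :=
  sInf {n | ∀ χ : Fin n → Fin n → Fin k, (∀ u v, χ u v = χ v u) → ∃ j, ContainsCyc (H j) χ j}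

/-- The standard Ramsey number of a family of graphs. -/
noncomputable def Rstd {k : ℕ} (m : Fin k → ℕ) (H : ∀ j, SimpleGraph (Fin (m j))) : ℕ :=
  sInf {n | ∀ χ : Fin n → Fin n → Fin k, (∀ u v, χ u v = χ v u) → ∃ j, ContainsStd (H j) χ j}

/-- The two-color ordered Ramsey number. -/
noncomputable def Rord2 {a b : ℕ} (H₁ : SimpleGraph (Fin a)) (H₂ : SimpleGraph (Fin b)) : ℕ :=
  sInf {n | ∀ χ : Fin n → Fin n → Fin 2, (∀ u v, χ u v = χ v u) →
    ContainsOrd H₁ χ 0 ∨ ContainsOrd H₂ χ 1}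

/-- The two-color cyclic Ramsey number. -/
noncomputable def Rcyc2 {a b : ℕ} (H₁ : SimpleGraph (Fin a)) (H₂ : SimpleGraph (Fin b)) : ℕ :=
  sInf {n | ∀ χ : Fin n → Fin n → Fin 2, (∀ u v, χ u v = χ v u) →
    ContainsCyc H₁ χ 0 ∨ ContainsCyc H₂ χ 1}

/-- The monotone path of order `n`. -/
def monPath (n : ℕ) : SimpleGraph (Fin n) :=
  SimpleGraph.fromRel fun u v => (u : ℕ) + 1 = (v : ℕ)

/-- The monotone cycle of order `n`. -/
def monCycle (n : ℕ) : SimpleGraph (Fin n) :=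
  SimpleGraph.fromRel fun u v => (u : ℕ) + 1 = (v : ℕ) ∨ ((u : ℕ) = 0 ∧ (v : ℕ) = n - 1)

/-- The start-central star of order `n` (center `0`). -/
def starSC (n : ℕ) : SimpleGraph (Fin n) :=
  SimpleGraph.fromRel fun u _ => (u : ℕ) = 0

/-- The star of order `n` with center `c`. -/
def starG (n : ℕ) (c : Fin n) : SimpleGraph (Fin n) :=
  SimpleGraph.fromRel fun u _ => u = c

/-- The nested matching of order `n`. -/
def nestedMatching (n : ℕ) : SimpleGraph (Fin n) :=
  SimpleGraph.fromRel fun u v => (u : ℕ) + (v : ℕ) = n - 1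

/-- Rotational isomorphism of two graphs on `Fin m`. -/
def RotIso {m : ℕ} (G₁ G₂ : SimpleGraph (Fin m)) : Prop :=
  ∃ s : Fin m, ∀ u v : Fin m, G₁.Adj u v ↔ G₂.Adj (u + s) (v + s)


section Aux

/-- Strictly monotone maps on `Fin` grow at least linearly. -/
lemma sm_gap {n m : ℕ} (ψ : Fin m → Fin n) (h : StrictMono ψ) :
    ∀ d : ℕ, ∀ i j : Fin m, (j : ℕ) = (i : ℕ) + d → (ψ i : ℕ) + d ≤ (ψ j : ℕ) := by
  intro d
  induction d with
  | zero =>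
    intro i j hj
    have : i = j := Fin.ext (by omega)
    subst this; omega
  | succ d ih =>
    intro i j hj
    have hk : (i : ℕ) + d < m := by have := j.isLt; omega
    have h1 := ih i ⟨(i : ℕ) + d, hk⟩ rfl
    have h2 : ψ ⟨(i : ℕ) + d, hk⟩ < ψ j := h (by simp [Fin.lt_def]; omega)
    have h3 := Fin.lt_def.mp h2
    omega

lemma div_lt_div_add {c x y : ℕ} (hc : 0 < c) (h : x + c ≤ y) : x / c < y / c := by
  have h1 : (x + c) / c ≤ y / c := Nat.div_le_div_right h
  rw [Nat.add_div_right _ hc] at h1; omega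

lemma fin2_eq_one {c : Fin 2} (h : c ≠ 0) : c = 1 := by
  have h1 : c.val ≠ 0 := fun hv => h (Fin.ext hv)
  have h2 := c.isLt
  exact Fin.ext (by omega)

lemma ord_to_cyc {m n : ℕ} (hm : 0 < m) {H : SimpleGraph (Fin m)}
    {χ : Fin n → Fin n → Fin 2} {j : Fin 2} (h : ContainsOrd H χ j) : ContainsCyc H χ j := by
  haveI : NeZero m := ⟨by omega⟩
  obtain ⟨φ, hmono, hcol⟩ := h
  exact ⟨φ, ⟨0, by simpa using hmono⟩, hcol⟩

/-- The set of lengths of increasing color-1 paths ending at `v`. -/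
def pset {N : ℕ} (χ : Fin N → Fin N → Fin 2) (v : Fin N) : Set ℕ :=
  {ℓ | ∃ φ : Fin ℓ → Fin N, StrictMono φ ∧ (∀ i : Fin ℓ, (i : ℕ) = ℓ - 1 → φ i = v) ∧
      ∀ i j : Fin ℓ, (i : ℕ) + 1 = (j : ℕ) → χ (φ i) (φ j) = 1}

lemma pset_one {N : ℕ} (χ : Fin N → Fin N → Fin 2) (v : Fin N) : 1 ∈ pset χ v := by
  refine ⟨fun _ => v, ?_, fun _ _ => rfl, ?_⟩
  · intro i j hij
    have hi := i.isLt; have hj := j.isLt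
    exact absurd (Fin.lt_def.mp hij) (by omega)
  · intro i j hij
    have hi := i.isLt; have hj := j.isLt
    omega

lemma pset_bdd {N : ℕ} (χ : Fin N → Fin N → Fin 2) (v : Fin N) : BddAbove (pset χ v) := by
  refine ⟨N, fun ℓ hℓ => ?_⟩
  obtain ⟨φ, hφ, -, -⟩ := hℓ
  simpa using Fintype.card_le_of_injective φ hφ.injective

lemma pset_succ {N : ℕ} {χ : Fin N → Fin N → Fin 2} {u v : Fin N} (huv : u < v)
    (h : χ u v = 1) {ℓ : ℕ} (hpos : 1 ≤ ℓ) (hmem : ℓ ∈ pset χ u) : ℓ + 1 ∈ pset χ v := by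
  obtain ⟨φ, hmono, hend, hedge⟩ := hmem
  have hu : φ ⟨ℓ - 1, by omega⟩ = u := hend _ rfl
  refine ⟨fun i => if h : (i : ℕ) < ℓ then φ ⟨i, h⟩ else v, ?_, ?_, ?_⟩
  · intro i j hij
    have hij' := Fin.lt_def.mp hij
    by_cases hj : (j : ℕ) < ℓ
    · have hi : (i : ℕ) < ℓ := by omega
      simp only [dif_pos hi, dif_pos hj]
      exact hmono (Fin.mk_lt_mk.mpr (by omega))
    · have hi : (i : ℕ) < ℓ := by have := j.isLt; omega
      simp only [dif_pos hi, dif_neg hj]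
      calc φ ⟨i, hi⟩ ≤ φ ⟨ℓ - 1, by omega⟩ := hmono.monotone (Fin.mk_le_mk.mpr (by omega))
        _ = u := hu
        _ < v := huv
  · intro i hi
    have hnot : ¬ ((i : ℕ) < ℓ) := by omega
    simp only [dif_neg hnot]
  · intro i j hij
    by_cases hj : (j : ℕ) < ℓ
    · have hi : (i : ℕ) < ℓ := by omega
      simp only [dif_pos hi, dif_pos hj]
      exact hedge _ _ hij
    · have hj' : (j : ℕ) = ℓ := by have := j.isLt; omega
      have hi : (i : ℕ) < ℓ := by omega
      simp only [dif_pos hi, dif_neg hj]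
      have hiu : φ ⟨i, hi⟩ = u := hend _ (show (i : ℕ) = ℓ - 1 by omega)
      rw [hiu]; exact h

/-- Length of the longest increasing color-1 path ending at `v`. -/
noncomputable def flen {N : ℕ} (χ : Fin N → Fin N → Fin 2) (v : Fin N) : ℕ :=
  sSup (pset χ v)

lemma flen_mem {N : ℕ} (χ : Fin N → Fin N → Fin 2) (v : Fin N) : flen χ v ∈ pset χ v :=
  Nat.sSup_mem ⟨1, pset_one χ v⟩ (pset_bdd χ v)

lemma flen_pos {N : ℕ} (χ : Fin N → Fin N → Fin 2) (v : Fin N) : 1 ≤ flen χ v :=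
  le_csSup (pset_bdd χ v) (pset_one χ v)

lemma flen_lt {N : ℕ} (χ : Fin N → Fin N → Fin 2) {u v : Fin N} (huv : u < v)
    (h : χ u v = 1) : flen χ u < flen χ v := by
  have hmem := pset_succ huv h (flen_pos χ u) (flen_mem χ u)
  have h2 : flen χ u + 1 ≤ flen χ v := le_csSup (pset_bdd χ v) hmem
  omega

lemma flen_path {N b : ℕ} (χ : Fin N → Fin N → Fin 2) (hsym : ∀ u v, χ u v = χ v u)
    {v : Fin N} (hb : b ≤ flen χ v) : ContainsOrd (monPath b) χ 1 := by
  obtain ⟨φ, hmono, -, hedge⟩ := flen_mem χ v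
  refine ⟨fun i => φ ⟨i, lt_of_lt_of_le i.isLt hb⟩, ?_, ?_⟩
  · intro i j hij
    exact hmono (by simp only [Fin.mk_lt_mk]; exact Fin.lt_def.mp hij)
  · intro x y hxy
    rw [monPath, SimpleGraph.fromRel_adj] at hxy
    obtain ⟨hne, h | h⟩ := hxy
    · exact hedge _ _ h
    · rw [hsym]; exact hedge _ _ h

lemma upper (a b N : ℕ) (ha : 2 ≤ a) (hb : 1 ≤ b) (hNval : N = 1 + (a-1)*(b-1))
    (χ : Fin N → Fin N → Fin 2) (hsym : ∀ u v, χ u v = χ v u) :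
    ContainsOrd (monCycle a) χ 0 ∨ ContainsOrd (monPath b) χ 1 := by
  by_cases hp : ∃ v, b ≤ flen χ v
  · obtain ⟨v, hv⟩ := hp
    exact Or.inr (flen_path χ hsym hv)
  push_neg at hp
  left
  have hNpos : 0 < N := by omega
  have hb2 : 2 ≤ b := by
    have h0 := flen_pos χ ⟨0, hNpos⟩
    have h1 := hp ⟨0, hNpos⟩
    omega
  have hfsub : ∀ v : Fin N, flen χ v - 1 < b - 1 := by
    intro v; have := hp v; have := flen_pos χ v; omega
  have hmaps : ∀ x ∈ (univ : Finset (Fin N)),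
      (⟨flen χ x - 1, hfsub x⟩ : Fin (b-1)) ∈ (univ : Finset (Fin (b-1))) := by
    intro x _; exact mem_univ _
  have hlt : (univ : Finset (Fin (b-1))).card * (a-1) < (univ : Finset (Fin N)).card := by
    simp only [card_univ, Fintype.card_fin]
    have : (b-1)*(a-1) = (a-1)*(b-1) := Nat.mul_comm _ _
    omega
  obtain ⟨y, -, hy⟩ := Finset.exists_lt_card_fiber_of_mul_lt_card_of_maps_to hmaps hlt
  have hy' : a ≤ (univ.filter fun x : Fin N => (⟨flen χ x - 1, hfsub x⟩ : Fin (b-1)) = y).card := by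
    omega
  obtain ⟨S, hS_sub, hS_card⟩ := Finset.exists_subset_card_eq hy'
  refine ⟨S.orderEmbOfFin hS_card, (S.orderEmbOfFin hS_card).strictMono, ?_⟩
  have hmemf : ∀ i : Fin a, flen χ (S.orderEmbOfFin hS_card i) = (y : ℕ) + 1 := by
    intro i
    have h1 : S.orderEmbOfFin hS_card i ∈ S := Finset.orderEmbOfFin_mem S hS_card i
    have h2 := hS_sub h1
    rw [Finset.mem_filter] at h2
    have h3 := congrArg Fin.val h2.2
    simp only [] at h3
    have := flen_pos χ (S.orderEmbOfFin hS_card i)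
    omega
  intro u v huv
  have hne : u ≠ v := huv.ne
  have hφne : S.orderEmbOfFin hS_card u ≠ S.orderEmbOfFin hS_card v :=
    fun h => hne ((S.orderEmbOfFin hS_card).injective h)
  have hfeq : flen χ (S.orderEmbOfFin hS_card u) = flen χ (S.orderEmbOfFin hS_card v) := by
    rw [hmemf, hmemf]
  have key : ∀ x z : Fin N, x < z → flen χ x = flen χ z → χ x z = 0 := by
    intro x z hxz hf
    by_contra hne0
    have h1 : χ x z = 1 := fin2_eq_one hne0
    have := flen_lt χ hxz h1
    omega
  rcases lt_or_gt_of_ne hφne with h | h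
  · exact key _ _ h hfeq
  · rw [hsym]; exact key _ _ h hfeq.symm

lemma monCycle_adj_of_val {a : ℕ} (ha : 2 ≤ a) {u v : Fin a}
    (h : ((u : ℕ) + 1) % a = (v : ℕ)) : (monCycle a).Adj u v := by
  rw [monCycle, SimpleGraph.fromRel_adj]
  have hu := u.isLt; have hv := v.isLt
  rcases Nat.lt_or_ge ((u : ℕ) + 1) a with hlt | hge
  · rw [Nat.mod_eq_of_lt hlt] at h
    exact ⟨fun hc => by have := congrArg Fin.val hc; omega, Or.inl (Or.inl h)⟩
  · have hu1 : (u : ℕ) = a - 1 := by omega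
    have he : (u : ℕ) + 1 = a := by omega
    rw [he, Nat.mod_self] at h
    exact ⟨fun hc => by have := congrArg Fin.val hc; omega, Or.inr (Or.inr ⟨h.symm, hu1⟩)⟩

lemma lower (a b m : ℕ) (ha : 2 ≤ a) (hb : 1 ≤ b) (hm : m ≤ (a-1)*(b-1)) :
    ∃ χ : Fin m → Fin m → Fin 2, (∀ u v, χ u v = χ v u) ∧
      ¬ ContainsCyc (monCycle a) χ 0 ∧ ¬ ContainsCyc (monPath b) χ 1 := by
  rcases Nat.eq_zero_or_pos m with hm0 | hm0
  · subst hm0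
    refine ⟨fun _ _ => 0, fun _ _ => rfl, ?_, ?_⟩
    · rintro ⟨φ, -, -⟩
      exact (φ ⟨0, by omega⟩).elim0
    · rintro ⟨φ, -, -⟩
      exact (φ ⟨0, by omega⟩).elim0
  have hb2 : 2 ≤ b := by
    by_contra hcon
    have hb1 : b = 1 := by omega
    rw [hb1] at hm
    simp at hm
    omega
  have hcpos : 0 < b - 1 := by omega
  refine ⟨fun u v => if (u : ℕ)/(b-1) = (v : ℕ)/(b-1) then 1 else 0, ?_, ?_, ?_⟩
  · intro u v
    show (if (u : ℕ)/(b-1) = (v : ℕ)/(b-1) then (1 : Fin 2) else 0) =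
      (if (v : ℕ)/(b-1) = (u : ℕ)/(b-1) then (1 : Fin 2) else 0)
    by_cases h : (u : ℕ)/(b-1) = (v : ℕ)/(b-1)
    · rw [if_pos h, if_pos h.symm]
    · rw [if_neg h, if_neg (fun h' => h h'.symm)]
  · rintro ⟨φ, ⟨t, hψ⟩, hcol⟩
    have hstep : ∀ j : ℕ, (hj : j + 1 < a) →
        (φ ((⟨j, by omega⟩ : Fin a) + t) : ℕ)/(b-1) < (φ ((⟨j+1, hj⟩ : Fin a) + t) : ℕ)/(b-1) := by
      intro j hj
      have hadj : (monCycle a).Adj ((⟨j, by omega⟩ : Fin a) + t) ((⟨j+1, hj⟩ : Fin a) + t) := by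
        apply monCycle_adj_of_val ha
        have e1 : (((⟨j, by omega⟩ : Fin a) + t : Fin a) : ℕ) = (j + (t : ℕ)) % a := by
          rw [Fin.add_def]
        have e2 : (((⟨j+1, hj⟩ : Fin a) + t : Fin a) : ℕ) = (j + 1 + (t : ℕ)) % a := by
          rw [Fin.add_def]
        rw [e1, e2]
        conv_rhs => rw [show j + 1 + (t : ℕ) = j + (t : ℕ) + 1 from by omega,
          Nat.add_mod (j + (t : ℕ)) 1 a, Nat.mod_eq_of_lt (show 1 < a from by omega)]
      have hA : (if (φ ((⟨j, by omega⟩ : Fin a) + t) : ℕ)/(b-1) =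
          (φ ((⟨j+1, hj⟩ : Fin a) + t) : ℕ)/(b-1) then (1 : Fin 2) else 0) = 0 := hcol _ _ hadj
      have hne : (φ ((⟨j, by omega⟩ : Fin a) + t) : ℕ)/(b-1) ≠
          (φ ((⟨j+1, hj⟩ : Fin a) + t) : ℕ)/(b-1) := by
        intro h
        rw [if_pos h] at hA
        exact absurd hA (by decide)
      have hmono : φ ((⟨j, by omega⟩ : Fin a) + t) < φ ((⟨j+1, hj⟩ : Fin a) + t) :=
        hψ (by simp [Fin.lt_def])
      exact lt_of_le_of_ne (Nat.div_le_div_right hmono.le) hne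
    have hgrow : ∀ j : ℕ, (hj : j < a) → j ≤ (φ ((⟨j, hj⟩ : Fin a) + t) : ℕ)/(b-1) := by
      intro j
      induction j with
      | zero => intro hj; exact Nat.zero_le _
      | succ k ih =>
        intro hj
        have h1 := ih (by omega)
        have h2 := hstep k hj
        omega
    have hlast := hgrow (a-1) (by omega)
    have hub : (φ ((⟨a-1, by omega⟩ : Fin a) + t) : ℕ)/(b-1) < a - 1 := by
      rw [Nat.div_lt_iff_lt_mul hcpos]
      have h5 := (φ ((⟨a-1, by omega⟩ : Fin a) + t)).isLt
      have h6 : (a-1)*(b-1) = (b-1)*(a-1) := Nat.mul_comm _ _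
      omega
    omega
  · rintro ⟨φ, ⟨t, hψ⟩, hcol⟩
    have hchain : ∀ j : ℕ, (hj : j < b) →
        (φ ⟨j, hj⟩ : ℕ)/(b-1) = (φ ⟨0, by omega⟩ : ℕ)/(b-1) := by
      intro j
      induction j with
      | zero => intro hj; rfl
      | succ k ih =>
        intro hj
        have hadj : (monPath b).Adj ⟨k, by omega⟩ ⟨k+1, hj⟩ := by
          rw [monPath, SimpleGraph.fromRel_adj]
          refine ⟨?_, Or.inl rfl⟩
          intro hcon
          have := congrArg Fin.val hcon
          simp at this
        have hA : (if (φ ⟨k, by omega⟩ : ℕ)/(b-1) = (φ ⟨k+1, hj⟩ : ℕ)/(b-1)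
            then (1 : Fin 2) else 0) = 1 := hcol _ _ hadj
        have heq : (φ ⟨k, by omega⟩ : ℕ)/(b-1) = (φ ⟨k+1, hj⟩ : ℕ)/(b-1) := by
          by_contra hne
          rw [if_neg hne] at hA
          exact absurd hA (by decide)
        rw [← heq]
        exact ih (by omega)
    have hgap : (φ ((⟨0, by omega⟩ : Fin b) + t) : ℕ) + (b - 1) ≤
        (φ ((⟨b-1, by omega⟩ : Fin b) + t) : ℕ) :=
      sm_gap _ hψ (b-1) ⟨0, by omega⟩ ⟨b-1, by omega⟩ (by simp)
    have h1 : (φ ((⟨0, by omega⟩ : Fin b) + t) : ℕ)/(b-1) = (φ ⟨0, by omega⟩ : ℕ)/(b-1) :=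
      hchain _ ((⟨0, by omega⟩ : Fin b) + t).isLt
    have h2 : (φ ((⟨b-1, by omega⟩ : Fin b) + t) : ℕ)/(b-1) = (φ ⟨0, by omega⟩ : ℕ)/(b-1) :=
      hchain _ ((⟨b-1, by omega⟩ : Fin b) + t).isLt
    have h3 := div_lt_div_add hcpos hgap
    omega

end Aux

theorem stmt9 (a b : ℕ) (ha : 2 ≤ a) (hb : 1 ≤ b) :
    Rcyc2 (monCycle a) (monPath b) = 1 + (a - 1) * (b - 1) := by
  have hN : (1 + (a-1)*(b-1)) ∈ {n | ∀ χ : Fin n → Fin n → Fin 2, (∀ u v, χ u v = χ v u) →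
      ContainsCyc (monCycle a) χ 0 ∨ ContainsCyc (monPath b) χ 1} := by
    intro χ hsym
    rcases upper a b _ ha hb rfl χ hsym with h | h
    · exact Or.inl (ord_to_cyc (by omega) h)
    · exact Or.inr (ord_to_cyc (by omega) h)
  unfold Rcyc2
  apply le_antisymm
  · exact Nat.sInf_le hN
  · refine le_csInf ⟨_, hN⟩ ?_
    intro m hm
    by_contra hcon
    push_neg at hcon
    obtain ⟨χ, hsym, hc, hp⟩ := lower a b m ha hb (by omega)
    rcases hm χ hsym with h | h
    · exact hc h
    · exact hp h
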